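/- Lemma (monotone vanishing of η): Let υ*_δ denote a solution of the δ-parameterized market-clearing problem with dual multiplier η*_δ (chosen minimal among optima). If η*_π = 0 for some π ∈ [0,1) and η*_1 = 0, then for every δ ∈ [π, 1] there exists an optimal solution with η*_δ = 0. -/

import Mathlib

/-- monotone vanishing of η: Let `K δ` be the set of solutions (υ, η) of the
δ-parameterized market-clearing optimality system, whose defining constraints are linear
in all variables and affine in δ, so that convex combinations of solutions are solutions
at the correspondingly combined parameter. If there is a solution with η = 0 at some
π ∈ [0,1) and a solution with η = 0 at δ = 1, then for every δ ∈ [π, 1] there is a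
solution with η = 0. -/
theorem stmt4 {V : Type*} [AddCommGroup V] [Module ℝ V]
    (K : ℝ → Set (V × ℝ))
    -- affine dependence on δ: convex combinations of solutions are solutions
    (hconv : ∀ δ₁ δ₂ : ℝ, ∀ u₁ u₂ : V × ℝ, u₁ ∈ K δ₁ → u₂ ∈ K δ₂ →
      ∀ s t : ℝ, 0 ≤ s → 0 ≤ t → s + t = 1 → s • u₁ + t • u₂ ∈ K (s * δ₁ + t * δ₂))
    (π : ℝ) (hπ : π ∈ Set.Ico (0 : ℝ) 1)
    (hπ0 : ∃ u : V, (u, (0 : ℝ)) ∈ K π)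
    (h10 : ∃ u : V, (u, (0 : ℝ)) ∈ K 1) :
    ∀ δ ∈ Set.Icc π 1, ∃ u : V, (u, (0 : ℝ)) ∈ K δ := by
  rintro δ ⟨hδπ, hδ1⟩
  obtain ⟨u₁, hu₁⟩ := hπ0
  obtain ⟨u₂, hu₂⟩ := h10
  have hπ1 : π < 1 := hπ.2
  have hd : (0:ℝ) < 1 - π := by linarith
  set s : ℝ := (1 - δ) / (1 - π) with hs
  set t : ℝ := (δ - π) / (1 - π) with ht
  have hs0 : 0 ≤ s := div_nonneg (by linarith) hd.le
  have ht0 : 0 ≤ t := div_nonneg (by linarith) hd.le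
  have hst : s + t = 1 := by
    rw [hs, ht, ← add_div, div_eq_one_iff_eq hd.ne']; ring
  have := hconv π 1 (u₁, 0) (u₂, 0) hu₁ hu₂ s t hs0 ht0 hst
  have hδeq : s * π + t * 1 = δ := by
    rw [hs, ht, div_mul_eq_mul_div, mul_one, ← add_div, div_eq_iff hd.ne']
    ring
  refine ⟨s • u₁ + t • u₂, ?_⟩
  have hη : s • ((u₁, (0:ℝ))) + t • ((u₂, (0:ℝ))) = (s • u₁ + t • u₂, (0:ℝ)) := by
    simp [Prod.ext_iff]
  rw [hδeq, hη] at this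
  exact this
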